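/- arXiv:2504.00301 — 2 statements merged into one kernel-verified Lean document; each statement's English description precedes it below -/
import Mathlib

section
/- Let (a,p) ∈ P^{2N}, let G be a DC graph on {1,...,N}, and let s^{(0)}, s^{(1)} ∈ ℝ^N satisfy, with the convention s^{(m)}(0) := 0, 0 < s^{(0)}(i) − s^{(0)}(i−1) ≤ s^{(1)}(i) − s^{(1)}(i−1) for every i ∈ {1,...,N}. Then T(G)(s^{(0)})(i) ≤ T(G)(s^{(1)})(i) for every i ∈ {1,...,N}, and moreover ‖T(G)(s^{(1)}) − T(G)(s^{(0)})‖_∞ ≤ (1 − q_1/q_N)·‖s^{(1)} − s^{(0)}‖_∞, where ‖·‖_∞ is the sup norm on ℝ^N. -/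
open Filter Topology
open scoped Classical

noncomputable section

/-- The positive part `x₊ = max x 0` of a real number. -/
def pos' (x : ℝ) : ℝ := max x 0

/-- `qq p i = p 1 + ... + p i` (so `qq p 0 = 0`). -/
def qq (p : ℕ → ℝ) (i : ℕ) : ℝ := ∑ j ∈ Finset.Icc 1 i, p j

/-- `dpar a i = a i - a (i-1)`, with the convention `a 0 = 0`. -/
def dpar (a : ℕ → ℝ) (i : ℕ) : ℝ := if i = 1 then a 1 else a i - a (i - 1)

/-- `(a, p)` is a parameter tuple in `P^{2N}`:
`0 < a 1 < a 2 < ... < a N` and `p 1, ..., p N > 0`. -/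
def IsParam (N : ℕ) (a p : ℕ → ℝ) : Prop :=
  0 < a 1 ∧ (∀ i, 1 ≤ i → i < N → a i < a (i + 1)) ∧ (∀ i, 1 ≤ i → i ≤ N → 0 < p i)

/-- `s` is a stationary tuple for the parameters `(a, p)`:
`0 < s 1 < ... < s N` and `a i = ∑_{j=1}^N p j * (s i - s j + s 1)₊` for `1 ≤ i ≤ N`. -/
def IsStationary' (N : ℕ) (a p s : ℕ → ℝ) : Prop :=
  0 < s 1 ∧ (∀ i, 1 ≤ i → i < N → s i < s (i + 1)) ∧
  ∀ i, 1 ≤ i → i ≤ N → a i = ∑ j ∈ Finset.Icc 1 N, p j * pos' (s i - s j + s 1)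

/-- The inverse of (the restriction to `[0, ∞)` of) a function `y : ℝ → ℝ`. -/
def tinv (y : ℝ → ℝ) (x : ℝ) : ℝ := Function.invFunOn y (Set.Ici 0) x

/-- The right derivative of `y` at `t` (the derivative of `y` at `t` within `[t, ∞)`). -/
def rD (y : ℝ → ℝ) (t : ℝ) : ℝ := derivWithin y (Set.Ici t) t

/-- The sequence `(y k)` satisfies recurrence (R).  The condition on the initial function `y 0`
(continuous, piecewise linear with at most `N` points of non-differentiability, vanishing at `0`,
with non-decreasing right derivative taking values in `{q 1, ..., q N}`) is encoded through its
canonical representation: such functions are exactly those of the form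
`t ↦ ∑_{j=1}^N p j * (t - c j)₊` with `c` non-negative, non-decreasing and `c 1 = 0`. -/
def SatisfiesR (N : ℕ) (a p : ℕ → ℝ) (y : ℕ → ℝ → ℝ) : Prop :=
  (∃ c : ℕ → ℝ, c 1 = 0 ∧ (∀ j, 1 ≤ j → j ≤ N → 0 ≤ c j) ∧
      (∀ j, 1 ≤ j → j < N → c j ≤ c (j + 1)) ∧
      ∀ t : ℝ, 0 ≤ t → y 0 t = ∑ j ∈ Finset.Icc 1 N, p j * pos' (t - c j)) ∧
  ∀ k : ℕ, ∀ t : ℝ, 0 ≤ t →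
    y (k + 1) t = ∑ j ∈ Finset.Icc 1 N, p j * pos' (t - tinv (y k) (a j) + tinv (y k) (a 1))

/-- The breakpoints `c j` of the lower bounding trajectory `y₀⁻`:
`c 1 = 0` and `c j = d 1 / q 1 + ∑_{l=2}^j d l / q (l-1)` for `j ≥ 2`. -/
def cminus (a p : ℕ → ℝ) (j : ℕ) : ℝ :=
  if j ≤ 1 then 0
  else a 1 / qq p 1 + ∑ l ∈ Finset.Icc 2 j, (a l - a (l - 1)) / qq p (l - 1)

/-- The lower bounding initial trajectory `y₀⁻`. -/
def yminus0 (N : ℕ) (a p : ℕ → ℝ) : ℝ → ℝ :=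
  fun t => ∑ j ∈ Finset.Icc 1 N, p j * pos' (t - cminus a p j)

/-- The upper bounding initial trajectory `y₀⁺ : t ↦ q N * t`. -/
def yplus0 (N : ℕ) (p : ℕ → ℝ) : ℝ → ℝ := fun t => qq p N * t

/-- The sequence satisfying recurrence (R) with prescribed initial term `y0`. -/
def iterR (N : ℕ) (a p : ℕ → ℝ) (y0 : ℝ → ℝ) : ℕ → ℝ → ℝ
  | 0 => y0
  | k + 1 => fun t =>
      ∑ j ∈ Finset.Icc 1 N,
        p j * pos' (t - tinv (iterR N a p y0 k) (a j) + tinv (iterR N a p y0 k) (a 1))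

/-- `y` is a stationary trajectory: an increasing bijection of `[0,∞)` satisfying the
fixed-point equation of recurrence (R). -/
def IsStatTraj (N : ℕ) (a p : ℕ → ℝ) (y : ℝ → ℝ) : Prop :=
  StrictMonoOn y (Set.Ici 0) ∧ Set.BijOn y (Set.Ici 0) (Set.Ici 0) ∧
  ∀ t : ℝ, 0 ≤ t → y t = ∑ j ∈ Finset.Icc 1 N, p j * pos' (t - tinv y (a j) + tinv y (a 1))

/-- `E_N`: the set of pairs `(i, j)` with `1 ≤ i < j ≤ N`. -/
def ENfin (N : ℕ) : Finset (ℕ × ℕ) :=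
  (Finset.Icc 1 N ×ˢ Finset.Icc 1 N).filter fun e => e.1 < e.2

/-- `Nested e e'` means `e ≼_E e'`, i.e. `e` is nested in `e'`. -/
def Nested (e e' : ℕ × ℕ) : Prop := e'.1 ≤ e.1 ∧ e.1 < e.2 ∧ e.2 ≤ e'.2

/-- `E` is the edge set of a downward closed graph on `{1, ..., N}`. -/
def IsDCGraph (N : ℕ) (E : Finset (ℕ × ℕ)) : Prop :=
  E ⊆ ENfin N ∧ ∀ e ∈ E, ∀ e' : ℕ × ℕ, Nested e' e → e' ∈ E

/-- `bG E i` is the greatest `j > i` with `(i, j) ∈ E`, and `i` if there is no such `j`;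
by convention `bG E 0 = 1`. -/
def bG (E : Finset (ℕ × ℕ)) (i : ℕ) : ℕ :=
  if i = 0 then 1 else max i ((E.filter fun e => e.1 = i).sup fun e => e.2)

/-- `m(G)`: the maximal elements of `E` for `≼_E`. -/
def maxE (E : Finset (ℕ × ℕ)) : Finset (ℕ × ℕ) :=
  E.filter fun e => ∀ e' ∈ E, Nested e e' → e' = e

/-- `M(G)`: the minimal elements of `E_N \ E` for `≼_E`. -/
def minNE (N : ℕ) (E : Finset (ℕ × ℕ)) : Finset (ℕ × ℕ) :=
  (ENfin N \ E).filter fun e => ∀ e' ∈ ENfin N \ E, Nested e' e → e' = e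

/-- The map `T(G) : ℝ^N → ℝ^N`. -/
def TG (a p : ℕ → ℝ) (E : Finset (ℕ × ℕ)) (s : ℕ → ℝ) (i : ℕ) : ℝ :=
  (1 / qq p (bG E i)) * (a i + ∑ j ∈ Finset.Icc 1 (bG E i), p j * (s j - s 1))

/-- The product of `γ` over the consecutive pairs (edges) of a list of vertices. -/
def pathProd (γ : ℕ → ℕ → ℝ) (l : List ℕ) : ℝ := (List.zipWith γ l l.tail).prod

/-- `Γ i j`: the sum, over all directed paths from `i` to `j` using edges of `E`, of the
product of `γ` over the edges of the path.  Since all edges of a DC graph increase, a directed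
path from `i` to `j` is identified with the set `S ⊆ (i, j)` of its intermediate vertices,
subject to consecutive vertices being joined by edges of `E`. -/
def GammaPath (E : Finset (ℕ × ℕ)) (γ : ℕ → ℕ → ℝ) (i j : ℕ) : ℝ :=
  if i = j then 1
  else if i < j then
    ∑ S ∈ (Finset.Ioo i j).powerset,
      if List.Chain' (fun u v => (u, v) ∈ E) (Finset.sort (insert i (insert j S)) (· ≤ ·))
      then pathProd γ (Finset.sort (insert i (insert j S)) (· ≤ ·)) else 0
  else 0

/-- The edge weight `γ^G_{i,j}`. -/
def gammaG (p : ℕ → ℝ) (E : Finset (ℕ × ℕ)) (i j : ℕ) : ℝ :=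
  (qq p (bG E i) - qq p (max (j - 1) (bG E (i - 1)))) / qq p (bG E (i - 1))

/-- `Γ^G_{i,j}`. -/
def GammaG (p : ℕ → ℝ) (E : Finset (ℕ × ℕ)) (i j : ℕ) : ℝ := GammaPath E (gammaG p E) i j

/-- `z_1^G (a, p)`. -/
def z1G (N : ℕ) (a p : ℕ → ℝ) (E : Finset (ℕ × ℕ)) : ℝ :=
  (∑ j ∈ Finset.Icc 1 N, GammaG p E 1 j * dpar a j / qq p (bG E (j - 1))) /
  (1 + ∑ j ∈ Finset.Icc 1 N,
      GammaG p E 1 j * (qq p (bG E j) - qq p (bG E (j - 1))) / qq p (bG E (j - 1)))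

/-- `z_i^G (a, p)`. -/
def zG (N : ℕ) (a p : ℕ → ℝ) (E : Finset (ℕ × ℕ)) (i : ℕ) : ℝ :=
  if i = 1 then z1G N a p E
  else
    (∑ j ∈ Finset.Icc i N, GammaG p E i j * dpar a j / qq p (bG E (j - 1))) -
      z1G N a p E *
        ∑ j ∈ Finset.Icc i N,
          GammaG p E i j * (qq p (bG E j) - qq p (bG E (j - 1))) / qq p (bG E (j - 1))

/-- `Z^G_{i,j} (a, p) = z_{i+1}^G + ... + z_j^G`. -/
def ZG (N : ℕ) (a p : ℕ → ℝ) (E : Finset (ℕ × ℕ)) (i j : ℕ) : ℝ :=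
  ∑ l ∈ Finset.Icc (i + 1) j, zG N a p E l

/-- The DC graph `Gr(a, p)` read off from the stationary tuple `s = s(a, p)`: its edges are
the pairs `(i, j) ∈ E_N` with `s 1 > s j - s i`. -/
def GrEdges (N : ℕ) (s : ℕ → ℝ) : Finset (ℕ × ℕ) :=
  (ENfin N).filter fun e => s e.2 - s e.1 < s 1

/-- `ζ` solves the linear system `S^G (a, p)`. -/
def SolvesS (N : ℕ) (a p : ℕ → ℝ) (E : Finset (ℕ × ℕ)) (ζ : ℕ → ℝ) : Prop :=
  ∀ i, 1 ≤ i → i ≤ N →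
    a i = ∑ j ∈ Finset.Icc 1 (bG E i),
      p j * ((∑ l ∈ Finset.Icc 1 i, ζ l) - (∑ l ∈ Finset.Icc 1 j, ζ l) + ζ 1)

/-- `P^{2N}`, viewed as a (cylinder) subset of the space of pairs of real sequences; only the
coordinates `a 1, ..., a N, p 1, ..., p N` are constrained. -/
def Pset (N : ℕ) : Set ((ℕ → ℝ) × (ℕ → ℝ)) := {ap | IsParam N ap.1 ap.2}

/-- The region `P_G = {(a, p) ∈ P^{2N} : Gr(a, p) = G}`. -/
def PGset (N : ℕ) (E : Finset (ℕ × ℕ)) : Set ((ℕ → ℝ) × (ℕ → ℝ)) :=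
  {ap | IsParam N ap.1 ap.2 ∧ ∃ s : ℕ → ℝ, IsStationary' N ap.1 ap.2 s ∧ GrEdges N s = E}

/-- The boundary of `P_G` relative to `P^{2N}`.  Since `P^{2N}` is open, the closure of `P_G`
relative to `P^{2N}` is `closure (PGset N E) ∩ Pset N` and its relative interior is
`interior (PGset N E)`. -/
def relBoundary (N : ℕ) (E : Finset (ℕ × ℕ)) : Set ((ℕ → ℝ) × (ℕ → ℝ)) :=
  (closure (PGset N E) ∩ Pset N) \ interior (PGset N E)

/-- The trajectory `y^{(m)}` built from a tuple `s`:
`t ↦ ∑_{j=1}^N p j * (t - s j + s 1)₊`. -/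
def trajOfS (N : ℕ) (p s : ℕ → ℝ) : ℝ → ℝ :=
  fun t => ∑ j ∈ Finset.Icc 1 N, p j * pos' (t - s j + s 1)

/-- The DC graph `G^{(m)}` associated with a tuple `s`: its edges are the `(i, j) ∈ E_N` with
`t^{(m)} (a i) - s j + s 1 > 0`, where `t^{(m)}` is the inverse of `trajOfS N p s`. -/
def GrFromS (N : ℕ) (a p s : ℕ → ℝ) : Finset (ℕ × ℕ) :=
  (ENfin N).filter fun e => 0 < tinv (trajOfS N p s) (a e.1) - s e.2 + s 1

end
/-- the map `T(G)` is monotone and contracting, Lemma 3.9. -/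
theorem stmt_6 (N : ℕ) (hN : 1 ≤ N) (a p : ℕ → ℝ) (hap : IsParam N a p)
    (E : Finset (ℕ × ℕ)) (hE : IsDCGraph N E)
    (s0 s1 : ℕ → ℝ) (h00 : s0 0 = 0) (h10 : s1 0 = 0)
    (hss : ∀ i, 1 ≤ i → i ≤ N →
      0 < s0 i - s0 (i - 1) ∧ s0 i - s0 (i - 1) ≤ s1 i - s1 (i - 1)) :
    (∀ i, 1 ≤ i → i ≤ N → TG a p E s0 i ≤ TG a p E s1 i) ∧
    ∀ i, 1 ≤ i → i ≤ N →
      |TG a p E s1 i - TG a p E s0 i| ≤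
        (1 - qq p 1 / qq p N) *
          (Finset.Icc 1 N).sup' (Finset.nonempty_Icc.mpr hN) (fun j => |s1 j - s0 j|) := by

  obtain ⟨ha1, hasm, hp⟩ := hap
  -- basic facts about bG
  have hbub : ∀ i, 1 ≤ i → i ≤ N → i ≤ bG E i ∧ bG E i ≤ N := by
    intro i hi1 hiN
    constructor
    · unfold bG
      rw [if_neg (by omega)]
      exact le_max_left _ _
    · unfold bG
      rw [if_neg (by omega)]
      apply max_le hiN
      apply Finset.sup_le
      intro e he
      have heE : e ∈ E := (Finset.mem_filter.mp he).1
      have := hE.1 heE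
      simp only [ENfin, Finset.mem_filter, Finset.mem_product, Finset.mem_Icc] at this
      exact this.1.2.2
  -- facts about qq
  have hqpos : ∀ i, 1 ≤ i → i ≤ N → 0 < qq p i := by
    intro i hi1 hiN
    unfold qq
    apply Finset.sum_pos
    · intro j hj
      simp only [Finset.mem_Icc] at hj
      exact hp j hj.1 (le_trans hj.2 hiN)
    · exact Finset.nonempty_Icc.mpr hi1
  have hqmono : ∀ i i', i ≤ i' → i' ≤ N → qq p i ≤ qq p i' := by
    intro i i' h hN'
    unfold qq
    apply Finset.sum_le_sum_of_subset_of_nonneg (Finset.Icc_subset_Icc_right h)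
    intro j hj _
    simp only [Finset.mem_Icc] at hj
    exact (hp j hj.1 (le_trans hj.2 hN')).le
  -- facts about the difference D j = s1 j - s0 j
  have hD0 : ∀ j, j ≤ N → 0 ≤ s1 j - s0 j := by
    intro j
    induction j with
    | zero => intro _; simp [h00, h10]
    | succ n ih =>
      intro h
      have h1 := hss (n + 1) (by omega) h
      have h2 := ih (by omega)
      simp only [Nat.add_sub_cancel] at h1
      linarith [h1.1, h1.2]
  have hD1 : ∀ j, 1 ≤ j → j ≤ N → s1 1 - s0 1 ≤ s1 j - s0 j := by
    intro j
    induction j with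
    | zero => omega
    | succ n ih =>
      intro _ hN'
      by_cases hn : n = 0
      · subst hn; exact le_refl _
      · have h2 := ih (by omega) (by omega)
        have h1 := hss (n + 1) (by omega) hN'
        simp only [Nat.add_sub_cancel] at h1
        linarith [h1.1, h1.2]
  -- the difference formula
  have hdiff : ∀ i, TG a p E s1 i - TG a p E s0 i =
      (1 / qq p (bG E i)) *
        ∑ j ∈ Finset.Icc 1 (bG E i), p j * ((s1 j - s0 j) - (s1 1 - s0 1)) := by
    intro i
    unfold TG
    rw [← mul_sub]
    congr 1
    rw [add_sub_add_left_eq_sub, ← Finset.sum_sub_distrib]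
    apply Finset.sum_congr rfl
    intro j _
    ring
  -- nonnegativity of the difference
  have hnn : ∀ i, 1 ≤ i → i ≤ N → 0 ≤ TG a p E s1 i - TG a p E s0 i := by
    intro i hi1 hiN
    rw [hdiff i]
    obtain ⟨hbl, hbu⟩ := hbub i hi1 hiN
    have hb1 : 1 ≤ bG E i := le_trans hi1 hbl
    have hqb : 0 < qq p (bG E i) := hqpos _ hb1 hbu
    apply mul_nonneg
    · exact div_nonneg zero_le_one hqb.le
    · apply Finset.sum_nonneg
      intro j hj
      simp only [Finset.mem_Icc] at hj
      apply mul_nonneg (hp j hj.1 (le_trans hj.2 hbu)).le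
      have := hD1 j hj.1 (le_trans hj.2 hbu)
      linarith
  constructor
  · intro i hi1 hiN
    have := hnn i hi1 hiN
    linarith
  · intro i hi1 hiN
    set M := (Finset.Icc 1 N).sup' (Finset.nonempty_Icc.mpr hN) (fun j => |s1 j - s0 j|) with hM
    have hMle : ∀ j, 1 ≤ j → j ≤ N → s1 j - s0 j ≤ M := by
      intro j hj1 hjN
      exact le_trans (le_abs_self _)
        (Finset.le_sup' (fun j => |s1 j - s0 j|) (Finset.mem_Icc.mpr ⟨hj1, hjN⟩))
    have hMnn : 0 ≤ M :=
      le_trans (abs_nonneg _)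
        (Finset.le_sup' (fun j => |s1 j - s0 j|) (Finset.mem_Icc.mpr ⟨hN, le_refl N⟩))
    obtain ⟨hbl, hbu⟩ := hbub i hi1 hiN
    have hb1 : 1 ≤ bG E i := le_trans hi1 hbl
    have hqb : 0 < qq p (bG E i) := hqpos _ hb1 hbu
    have hq1 : 0 < qq p 1 := hqpos 1 le_rfl hN
    have hqN : 0 < qq p N := hqpos N hN le_rfl
    have hqbN : qq p (bG E i) ≤ qq p N := hqmono _ _ hbu le_rfl
    rw [abs_of_nonneg (hnn i hi1 hiN), hdiff i]
    -- bound the sum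
    have hsum : ∑ j ∈ Finset.Icc 1 (bG E i), p j * ((s1 j - s0 j) - (s1 1 - s0 1)) ≤
        (qq p (bG E i) - qq p 1) * M := by
      rw [← Finset.Ioc_insert_left hb1, Finset.sum_insert (by simp)]
      simp only [sub_self, mul_zero, zero_add]
      have h1 : ∑ j ∈ Finset.Ioc 1 (bG E i), p j * ((s1 j - s0 j) - (s1 1 - s0 1)) ≤
          ∑ j ∈ Finset.Ioc 1 (bG E i), p j * M := by
        apply Finset.sum_le_sum
        intro j hj
        simp only [Finset.mem_Ioc] at hj
        apply mul_le_mul_of_nonneg_left _ (hp j (by omega) (le_trans hj.2 hbu)).le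
        have h2 := hMle j (by omega) (le_trans hj.2 hbu)
        have h3 := hD0 1 hN
        linarith
      refine le_trans h1 ?_
      rw [← Finset.sum_mul]
      apply mul_le_mul_of_nonneg_right _ hMnn
      have key : qq p 1 + ∑ j ∈ Finset.Ioc 1 (bG E i), p j = qq p (bG E i) := by
        unfold qq
        rw [show (1 : ℕ) = 0 + 1 from rfl, Finset.Icc_add_one_left_eq_Ioc, Finset.Icc_add_one_left_eq_Ioc]
        exact Finset.sum_Ioc_consecutive _ (Nat.zero_le 1) hb1
      linarith
    have step : (1 / qq p (bG E i)) *
        ∑ j ∈ Finset.Icc 1 (bG E i), p j * ((s1 j - s0 j) - (s1 1 - s0 1)) ≤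
        (1 - qq p 1 / qq p (bG E i)) * M := by
      have h4 : (1 / qq p (bG E i)) * ((qq p (bG E i) - qq p 1) * M) =
          (1 - qq p 1 / qq p (bG E i)) * M := by
        field_simp
      rw [← h4]
      apply mul_le_mul_of_nonneg_left hsum (div_nonneg zero_le_one hqb.le)
    refine le_trans step ?_
    apply mul_le_mul_of_nonneg_right _ hMnn
    have : qq p 1 / qq p N ≤ qq p 1 / qq p (bG E i) :=
      div_le_div_of_nonneg_left hq1.le hqb hqbN
    linarith
end

section
/- For every DC graph G on {1,...,N} and every (a,p) ∈ P^{2N}, the linear system S^G(a,p) has a unique solution (ζ_1,...,ζ_N) ∈ ℝ^N, and this solution is given by ζ_i = z_i^G(a,p) for every i ∈ {1,...,N}. -/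
open Filter Topology
open scoped Classical

namespace Stmt8

open Finset

/-- The generic summand of `GammaPath`. -/
noncomputable def F (E : Finset (ℕ × ℕ)) (γ : ℕ → ℕ → ℝ) (T : Finset ℕ) : ℝ :=
  if List.Chain' (fun u v => (u, v) ∈ E) (Finset.sort T (· ≤ ·)) then
    pathProd γ (Finset.sort T (· ≤ ·)) else 0

lemma F_singleton (E : Finset (ℕ × ℕ)) (γ : ℕ → ℕ → ℝ) (j : ℕ) : F E γ {j} = 1 := by
  simp [F, pathProd, List.Chain']

lemma gammaPath_eq_sum (E : Finset (ℕ × ℕ)) (γ : ℕ → ℕ → ℝ) {l j : ℕ} (h : l ≤ j) :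
    GammaPath E γ l j = ∑ S ∈ (Finset.Ioo l j).powerset, F E γ (insert l (insert j S)) := by
  rcases eq_or_lt_of_le h with rfl | h
  · simp [GammaPath, F_singleton]
  · rw [GammaPath, if_neg h.ne, if_pos h]
    rfl

lemma gammaPath_self (E : Finset (ℕ × ℕ)) (γ : ℕ → ℕ → ℝ) (i : ℕ) : GammaPath E γ i i = 1 := by
  simp [GammaPath]

lemma gammaPath_of_gt (E : Finset (ℕ × ℕ)) (γ : ℕ → ℕ → ℝ) {i j : ℕ} (h : j < i) :
    GammaPath E γ i j = 0 := by
  rw [GammaPath, if_neg (by omega), if_neg (by omega)]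

lemma pathProd_cons (γ : ℕ → ℕ → ℝ) (a b : ℕ) (t : List ℕ) :
    pathProd γ (a :: b :: t) = γ a b * pathProd γ (b :: t) := by
  simp [pathProd]

lemma ite_and_mul_helper (A C : Prop) [Decidable A] [Decidable C] (x y : ℝ) :
    (if A ∧ C then x * y else 0) = if A then x * (if C then y else 0) else 0 := by
  by_cases hA : A <;> by_cases hC : C <;> simp [hA, hC]

lemma gammaPath_rec (E : Finset (ℕ × ℕ)) (γ : ℕ → ℕ → ℝ) {i j : ℕ} (hij : i < j) :
    GammaPath E γ i j =
      ∑ l ∈ Finset.Ioc i j, if (i, l) ∈ E then γ i l * GammaPath E γ l j else 0 := by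
  have hrhs : ∀ l ∈ Finset.Ioc i j,
      (if (i, l) ∈ E then γ i l * GammaPath E γ l j else 0) =
      ∑ S ∈ (Finset.Ioo l j).powerset,
        (if (i, l) ∈ E then γ i l * F E γ (insert l (insert j S)) else 0) := by
    intro l hl
    rw [gammaPath_eq_sum E γ (Finset.mem_Ioc.mp hl).2]
    split_ifs with h
    · rw [Finset.mul_sum]
    · simp
  rw [Finset.sum_congr rfl hrhs, Finset.sum_sigma']
  rw [GammaPath, if_neg hij.ne, if_pos hij]
  refine Finset.sum_nbij'
    (fun S => ⟨((insert j S).min' (Finset.insert_nonempty _ _)),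
        S.erase ((insert j S).min' (Finset.insert_nonempty _ _))⟩)
    (fun x => (insert x.1 x.2).erase j) ?_ ?_ ?_ ?_ ?_
  · -- maps into sigma
    intro S hS
    rw [Finset.mem_powerset] at hS
    set m := (insert j S).min' (Finset.insert_nonempty _ _) with hm
    have hmem : m ∈ insert j S := Finset.min'_mem _ _
    have hmj : m ≤ j := Finset.min'_le _ _ (Finset.mem_insert_self _ _)
    have him : i < m := by
      rcases Finset.mem_insert.mp hmem with h | h
      · omega
      · exact (Finset.mem_Ioo.mp (hS h)).1
    rw [Finset.mem_sigma]
    dsimp only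
    rw [Finset.mem_Ioc, Finset.mem_powerset]
    refine ⟨⟨him, hmj⟩, ?_⟩
    intro x hx
    have hxS := Finset.mem_of_mem_erase hx
    have hxm := Finset.ne_of_mem_erase hx
    have hxm' : m ≤ x := Finset.min'_le _ _ (Finset.mem_insert_of_mem hxS)
    exact Finset.mem_Ioo.mpr ⟨lt_of_le_of_ne hxm' (Ne.symm hxm), (Finset.mem_Ioo.mp (hS hxS)).2⟩
  · -- inverse maps into powerset
    rintro ⟨l, S'⟩ hx
    rw [Finset.mem_sigma] at hx
    dsimp only at hx ⊢
    rw [Finset.mem_Ioc] at hx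
    obtain ⟨⟨hil, hlj⟩, hS'⟩ := hx
    rw [Finset.mem_powerset] at hS' ⊢
    intro x hx
    have hxj := Finset.ne_of_mem_erase hx
    have hxmem := Finset.mem_of_mem_erase hx
    rcases Finset.mem_insert.mp hxmem with rfl | h
    · exact Finset.mem_Ioo.mpr ⟨hil, lt_of_le_of_ne hlj hxj⟩
    · have := Finset.mem_Ioo.mp (hS' h)
      exact Finset.mem_Ioo.mpr ⟨hil.trans this.1, this.2⟩
  · -- left inverse : φ (ψ S) = S
    intro S hS
    rw [Finset.mem_powerset] at hS
    dsimp only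
    set m := (insert j S).min' (Finset.insert_nonempty _ _) with hm
    have hmem : m ∈ insert j S := Finset.min'_mem _ _
    by_cases hmj : m = j
    · have hSempty : S = ∅ := by
        by_contra h
        obtain ⟨x, hx⟩ := Finset.nonempty_iff_ne_empty.mpr h
        have h1 : m ≤ x := Finset.min'_le _ _ (Finset.mem_insert_of_mem hx)
        have h2 : x < j := (Finset.mem_Ioo.mp (hS hx)).2
        omega
      rw [hSempty, hmj]
      simp
    · have hmS : m ∈ S := by
        rcases Finset.mem_insert.mp hmem with h | h
        · exact absurd h hmj
        · exact h
      rw [Finset.insert_erase hmS]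
      rw [Finset.erase_eq_of_notMem]
      intro hjS
      exact (Finset.mem_Ioo.mp (hS hjS)).2.ne rfl
  · -- right inverse : ψ (φ x) = x
    rintro ⟨l, S'⟩ hx
    rw [Finset.mem_sigma] at hx
    dsimp only at hx ⊢
    rw [Finset.mem_Ioc] at hx
    obtain ⟨⟨hil, hlj⟩, hS'⟩ := hx
    rw [Finset.mem_powerset] at hS'
    by_cases hljeq : l = j
    · subst hljeq
      have hS'e : S' = ∅ := by
        rw [← Finset.subset_empty]
        intro x hx
        have := Finset.mem_Ioo.mp (hS' hx); omega
      subst hS'e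
      simp
    · have hlltj : l < j := lt_of_le_of_ne hlj hljeq
      have hjS' : j ∉ insert l S' := by
        rw [Finset.mem_insert]
        push_neg
        exact ⟨Ne.symm hljeq, fun h => ((Finset.mem_Ioo.mp (hS' h)).2).ne rfl⟩
      have hlS' : l ∉ S' := fun h => ((Finset.mem_Ioo.mp (hS' h)).1).ne rfl
      rw [Finset.erase_eq_of_notMem hjS']
      have hmin : (insert j (insert l S')).min' (Finset.insert_nonempty _ _) = l := by
        apply le_antisymm
        · exact Finset.min'_le _ _ (Finset.mem_insert_of_mem (Finset.mem_insert_self _ _))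
        · apply Finset.le_min'
          intro x hx
          rcases Finset.mem_insert.mp hx with rfl | hx
          · omega
          · rcases Finset.mem_insert.mp hx with rfl | hx
            · rfl
            · exact (Finset.mem_Ioo.mp (hS' hx)).1.le
      have h2 : (insert l S').erase ((insert j (insert l S')).min' (Finset.insert_nonempty _ _))
          = S' := by rw [hmin]; exact Finset.erase_insert hlS'
      exact Sigma.ext hmin (heq_of_eq h2)
  · -- summand equality
    intro S hS
    rw [Finset.mem_powerset] at hS
    dsimp only
    set m := (insert j S).min' (Finset.insert_nonempty _ _) with hm
    have hmem : m ∈ insert j S := Finset.min'_mem _ _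
    have hmlej : m ≤ j := Finset.min'_le _ _ (Finset.mem_insert_self _ _)
    have him : i < m := by
      rcases Finset.mem_insert.mp hmem with h | h
      · omega
      · exact (Finset.mem_Ioo.mp (hS h)).1
    by_cases hmj : m = j
    · have hSempty : S = ∅ := by
        by_contra h
        obtain ⟨x, hx⟩ := Finset.nonempty_iff_ne_empty.mpr h
        have h1 : m ≤ x := Finset.min'_le _ _ (Finset.mem_insert_of_mem hx)
        have h2 : x < j := (Finset.mem_Ioo.mp (hS hx)).2
        omega
      rw [hSempty, hmj]
      have hsort : Finset.sort (insert i (insert j (∅ : Finset ℕ))) (· ≤ ·) = [i, j] := by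
        have h1 : ∀ b ∈ insert j (∅ : Finset ℕ), i ≤ b := by
          intro b hb; simp at hb; omega
        have h2 : i ∉ insert j (∅ : Finset ℕ) := by simp; omega
        rw [Finset.sort_insert _ h1 h2]
        simp
      rw [hsort]
      have hF : F E γ (insert j (insert j (Finset.erase (∅ : Finset ℕ) j))) = 1 := by
        simp [F, pathProd, List.Chain']
      rw [hF]
      simp only [List.Chain', List.isChain_pair, pathProd, List.tail_cons, List.zipWith,
        List.prod_cons, List.prod_nil]
    · have hmS : m ∈ S := by
        rcases Finset.mem_insert.mp hmem with h | h
        · exact absurd h hmj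
        · exact h
      have hmltj : m < j := lt_of_le_of_ne hmlej hmj
      have hmS' : m ∉ S.erase m := Finset.notMem_erase _ _
      have hins : insert j S = insert m (insert j (S.erase m)) := by
        rw [Finset.insert_comm, Finset.insert_erase hmS]
      have hsort2 : Finset.sort (insert m (insert j (S.erase m))) (· ≤ ·)
          = m :: Finset.sort (insert j (S.erase m)) (· ≤ ·) := by
        apply Finset.sort_insert
        · intro b hb
          rcases Finset.mem_insert.mp hb with rfl | hb
          · omega
          · exact Finset.min'_le _ _ (Finset.mem_insert_of_mem (Finset.mem_of_mem_erase hb))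
        · rw [Finset.mem_insert]
          push_neg
          exact ⟨hmj, hmS'⟩
      have hiNot : i ∉ insert j S := by
        rw [Finset.mem_insert]
        push_neg
        exact ⟨by omega, fun h => lt_irrefl i (Finset.mem_Ioo.mp (hS h)).1⟩
      have hiLe : ∀ b ∈ insert j S, i ≤ b := by
        intro b hb
        rcases Finset.mem_insert.mp hb with rfl | hb
        · omega
        · exact (Finset.mem_Ioo.mp (hS hb)).1.le
      have hsortJS : Finset.sort (insert j S) (· ≤ ·)
          = m :: Finset.sort (insert j (S.erase m)) (· ≤ ·) := by
        rw [hins]; exact hsort2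
      have hsort1 : Finset.sort (insert i (insert j S)) (· ≤ ·)
          = i :: m :: Finset.sort (insert j (S.erase m)) (· ≤ ·) := by
        rw [Finset.sort_insert _ hiLe hiNot, hsortJS]
      rw [hsort1]
      simp only [F, hsort2]
      simp only [List.Chain', List.isChain_cons_cons, pathProd_cons]
      convert ite_and_mul_helper ((i, m) ∈ E)
        (List.IsChain (fun u v => (u, v) ∈ E) (m :: Finset.sort (insert j (S.erase m)) (· ≤ ·))) _ _
      exact ite_congr rfl (fun _ => rfl) (fun _ => rfl)


/-! ### Facts about `qq` and `bG` -/

lemma qq_Ioc (p : ℕ → ℝ) (k : ℕ) : qq p k = ∑ x ∈ Finset.Ioc 0 k, p x := by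
  rw [qq]
  apply Finset.sum_congr _ (fun _ _ => rfl)
  ext x; rw [Finset.mem_Icc, Finset.mem_Ioc]; omega

lemma qq_zero (p : ℕ → ℝ) : qq p 0 = 0 := by simp [qq]

lemma qq_sub (p : ℕ → ℝ) {m n : ℕ} (h : m ≤ n) :
    qq p n - qq p m = ∑ x ∈ Finset.Ioc m n, p x := by
  rw [qq_Ioc, qq_Ioc, ← Finset.sum_Ioc_consecutive _ (Nat.zero_le m) h]; ring

lemma qq_mono {N : ℕ} {p : ℕ → ℝ} (hp : ∀ i, 1 ≤ i → i ≤ N → 0 < p i) {m n : ℕ}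
    (hmn : m ≤ n) (hn : n ≤ N) : qq p m ≤ qq p n := by
  have h := qq_sub p hmn
  have h2 : 0 ≤ ∑ x ∈ Finset.Ioc m n, p x := by
    apply Finset.sum_nonneg
    intro x hx
    rw [Finset.mem_Ioc] at hx
    exact (hp x (by omega) (by omega)).le
  linarith

lemma qq_pos {N : ℕ} {p : ℕ → ℝ} (hp : ∀ i, 1 ≤ i → i ≤ N → 0 < p i) {m : ℕ}
    (h1 : 1 ≤ m) (hm : m ≤ N) : 0 < qq p m := by
  rw [qq]
  apply Finset.sum_pos
  · intro x hx
    rw [Finset.mem_Icc] at hx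
    exact hp x hx.1 (by omega)
  · exact ⟨1, Finset.mem_Icc.mpr ⟨le_refl 1, h1⟩⟩

lemma bG_zero (E : Finset (ℕ × ℕ)) : bG E 0 = 1 := by simp [bG]

lemma le_bG (E : Finset (ℕ × ℕ)) {i : ℕ} (h1 : 1 ≤ i) : i ≤ bG E i := by
  rw [bG, if_neg (by omega)]; exact le_max_left _ _

lemma one_le_bG (E : Finset (ℕ × ℕ)) (i : ℕ) : 1 ≤ bG E i := by
  rcases Nat.eq_zero_or_pos i with rfl | h
  · rw [bG_zero]
  · exact le_trans h (le_bG E h)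

lemma mem_ENfin_iff {N : ℕ} {e : ℕ × ℕ} :
    e ∈ ENfin N ↔ 1 ≤ e.1 ∧ e.1 < e.2 ∧ e.2 ≤ N := by
  rw [ENfin, Finset.mem_filter, Finset.mem_product, Finset.mem_Icc, Finset.mem_Icc]
  omega

lemma bG_le {N : ℕ} {E : Finset (ℕ × ℕ)} (hE : IsDCGraph N E) {i : ℕ}
    (h1 : 1 ≤ i) (hiN : i ≤ N) : bG E i ≤ N := by
  rw [bG, if_neg (by omega)]
  apply max_le hiN
  apply Finset.sup_le
  intro e he
  have heE : e ∈ E := Finset.mem_of_mem_filter _ he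
  exact (mem_ENfin_iff.mp (hE.1 heE)).2.2

lemma edge_iff {N : ℕ} {E : Finset (ℕ × ℕ)} (hE : IsDCGraph N E) {i l : ℕ}
    (h1 : 1 ≤ i) : ((i, l) ∈ E ↔ i < l ∧ l ≤ bG E i) := by
  constructor
  · intro h
    have hm := mem_ENfin_iff.mp (hE.1 h)
    refine ⟨hm.2.1, ?_⟩
    rw [bG, if_neg (by omega)]
    have hmem : ((i, l) : ℕ × ℕ) ∈ E.filter (fun e => e.1 = i) :=
      Finset.mem_filter.mpr ⟨h, rfl⟩
    have h2 : l ≤ (E.filter fun e => e.1 = i).sup (fun e => e.2) :=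
      Finset.le_sup (f := fun e => e.2) hmem
    exact le_max_of_le_right h2
  · rintro ⟨hil, hlb⟩
    rw [bG, if_neg (by omega)] at hlb
    have hsup : i < (E.filter fun e => e.1 = i).sup (fun e => e.2) := by
      by_contra hc
      push_neg at hc
      rw [max_eq_left hc] at hlb
      omega
    have hne : (E.filter fun e => e.1 = i).Nonempty := by
      by_contra hc
      rw [Finset.not_nonempty_iff_eq_empty] at hc
      rw [hc] at hsup
      simp at hsup
    obtain ⟨e, heF, hesup⟩ := Finset.exists_mem_eq_sup _ hne (fun e => e.2)
    have heE : e ∈ E := Finset.mem_of_mem_filter _ heF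
    have he1 : e.1 = i := (Finset.mem_filter.mp heF).2
    apply hE.2 e heE
    refine ⟨by omega, hil, ?_⟩
    rw [← hesup]
    have : l ≤ max i ((E.filter fun e => e.1 = i).sup fun e => e.2) := hlb
    omega

lemma bG_pred_le {N : ℕ} {E : Finset (ℕ × ℕ)} (hE : IsDCGraph N E) {i : ℕ}
    (h1 : 1 ≤ i) (hiN : i ≤ N) : bG E (i - 1) ≤ bG E i := by
  rcases Nat.eq_or_lt_of_le h1 with h | h
  · rw [← h]
    simpa [bG_zero] using one_le_bG E 1
  · -- 2 ≤ i
    have hk1 : 1 ≤ i - 1 := by omega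
    rcases le_or_gt (bG E (i - 1)) i with hle | hgt
    · exact hle.trans (le_bG E h1)
    · have hedge : (i - 1, bG E (i - 1)) ∈ E := by
        rw [edge_iff hE hk1]
        exact ⟨by omega, le_refl _⟩
      have : (i, bG E (i - 1)) ∈ E := hE.2 _ hedge _ ⟨by omega, by omega, le_refl _⟩
      exact ((edge_iff hE h1).mp this).2

/-! ### Nonnegativity of path weights -/

lemma pathProd_nonneg {E : Finset (ℕ × ℕ)} {γ : ℕ → ℕ → ℝ}
    (hγ : ∀ u v, (u, v) ∈ E → 0 ≤ γ u v) :
    ∀ l : List ℕ, List.Chain' (fun u v => (u, v) ∈ E) l → 0 ≤ pathProd γ l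
  | [] , _ => by simp [pathProd]
  | [x], _ => by simp [pathProd]
  | (x :: y :: t), h => by
      rw [pathProd_cons]
      have h' := List.isChain_cons_cons.mp h
      exact mul_nonneg (hγ _ _ h'.1) (pathProd_nonneg hγ (y :: t) h'.2)

lemma gammaPath_nonneg {E : Finset (ℕ × ℕ)} {γ : ℕ → ℕ → ℝ}
    (hγ : ∀ u v, (u, v) ∈ E → 0 ≤ γ u v) (i j : ℕ) : 0 ≤ GammaPath E γ i j := by
  rw [GammaPath]
  split_ifs with h1 h2
  · norm_num
  · apply Finset.sum_nonneg
    intro S hS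
    split_ifs with h
    · exact pathProd_nonneg hγ _ h
    · exact le_refl 0
  · exact le_refl 0

lemma gammaG_nonneg {N : ℕ} {p : ℕ → ℝ} {E : Finset (ℕ × ℕ)}
    (hp : ∀ i, 1 ≤ i → i ≤ N → 0 < p i) (hE : IsDCGraph N E) :
    ∀ u v, (u, v) ∈ E → 0 ≤ gammaG p E u v := by
  intro u v huv
  have hm := mem_ENfin_iff.mp (hE.1 huv)
  obtain ⟨hu1, huv', hvN⟩ := hm
  have huN : u ≤ N := by omega
  have hvb : v ≤ bG E u := ((edge_iff hE hu1).mp huv).2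
  have hbu : bG E u ≤ N := bG_le hE hu1 huN
  have hbu1 : bG E (u - 1) ≤ bG E u := bG_pred_le hE hu1 huN
  have hb1 : 1 ≤ bG E (u - 1) := one_le_bG E _
  have hbuN : bG E (u - 1) ≤ N := le_trans hbu1 hbu
  rw [gammaG]
  apply div_nonneg
  · have : max (v - 1) (bG E (u - 1)) ≤ bG E u := by omega
    have := qq_mono hp this hbu
    linarith
  · exact (qq_pos hp hb1 hbuN).le

/-! ### Closed form of the equations of the system -/

lemma Icc_eq_Ioc {m n : ℕ} (hm : 1 ≤ m) : Finset.Icc m n = Finset.Ioc (m - 1) n := by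
  ext x; rw [Finset.mem_Icc, Finset.mem_Ioc]; omega

lemma sum_Icc_split (f : ℕ → ℝ) {m i n : ℕ} (h1 : m ≤ i + 1) (h2 : i ≤ n) (hm : 1 ≤ m) :
    ∑ l ∈ Finset.Icc m n, f l = (∑ l ∈ Finset.Icc m i, f l) + ∑ l ∈ Finset.Icc (i + 1) n, f l := by
  rw [Icc_eq_Ioc hm, Icc_eq_Ioc hm, Icc_eq_Ioc (by omega : (1:ℕ) ≤ i + 1)]
  simp only [Nat.add_sub_cancel]
  exact (Finset.sum_Ioc_consecutive _ (by omega) h2).symm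

lemma swap_sum (p ζ : ℕ → ℝ) (m : ℕ) :
    ∑ j ∈ Finset.Icc 1 m, p j * ∑ l ∈ Finset.Icc 1 j, ζ l
      = ∑ l ∈ Finset.Icc 1 m, (qq p m - qq p (l - 1)) * ζ l := by
  have key := Finset.sum_Ico_Ico_comm 1 (m + 1) (fun l j => p j * ζ l)
  have e1 : ∀ x y : ℕ, Finset.Ico x (y + 1) = Finset.Icc x y := fun x y => by
    ext z; rw [Finset.mem_Ico, Finset.mem_Icc]; omega
  calc ∑ j ∈ Finset.Icc 1 m, p j * ∑ l ∈ Finset.Icc 1 j, ζ l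
      = ∑ j ∈ Finset.Icc 1 m, ∑ l ∈ Finset.Icc 1 j, p j * ζ l := by
        apply Finset.sum_congr rfl; intro j _; rw [Finset.mul_sum]
    _ = ∑ j ∈ Finset.Ico 1 (m + 1), ∑ l ∈ Finset.Ico 1 (j + 1), p j * ζ l := by
        rw [e1 1 m]
        apply Finset.sum_congr rfl; intro j _; rw [e1 1 j]
    _ = ∑ l ∈ Finset.Ico 1 (m + 1), ∑ j ∈ Finset.Ico l (m + 1), p j * ζ l := key.symm
    _ = ∑ l ∈ Finset.Icc 1 m, ∑ j ∈ Finset.Icc l m, p j * ζ l := by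
        rw [e1 1 m]
        apply Finset.sum_congr rfl; intro l hl
        apply Finset.sum_congr _ (fun _ _ => rfl)
        ext x; rw [Finset.mem_Ico, Finset.mem_Icc]; omega
    _ = ∑ l ∈ Finset.Icc 1 m, (qq p m - qq p (l - 1)) * ζ l := by
        apply Finset.sum_congr rfl; intro l hl
        rw [Finset.mem_Icc] at hl
        rw [← Finset.sum_mul]
        congr 1
        rw [qq_sub p (by omega : l - 1 ≤ m)]
        congr 1
        ext x; rw [Finset.mem_Icc, Finset.mem_Ioc]; omega

lemma Req_closed (p ζ : ℕ → ℝ) {i m : ℕ} (h1 : 1 ≤ i) (him : i ≤ m) :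
    ∑ j ∈ Finset.Icc 1 m, p j * ((∑ l ∈ Finset.Icc 1 i, ζ l) - (∑ l ∈ Finset.Icc 1 j, ζ l) + ζ 1)
      = qq p m * ζ 1 + (∑ l ∈ Finset.Icc 2 i, qq p (l - 1) * ζ l)
        - ∑ l ∈ Finset.Icc (i + 1) m, (qq p m - qq p (l - 1)) * ζ l := by
  have e1 : ∑ j ∈ Finset.Icc 1 m, p j * ((∑ l ∈ Finset.Icc 1 i, ζ l)
        - (∑ l ∈ Finset.Icc 1 j, ζ l) + ζ 1)
      = qq p m * ((∑ l ∈ Finset.Icc 1 i, ζ l) + ζ 1)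
        - ∑ j ∈ Finset.Icc 1 m, p j * ∑ l ∈ Finset.Icc 1 j, ζ l := by
    rw [qq, Finset.sum_mul, ← Finset.sum_sub_distrib]
    apply Finset.sum_congr rfl; intro j _; ring
  rw [e1, swap_sum]
  rw [sum_Icc_split (fun l => (qq p m - qq p (l - 1)) * ζ l) (by omega) him (le_refl 1)]
  have e2 : ∑ l ∈ Finset.Icc 1 i, (qq p m - qq p (l - 1)) * ζ l
      = qq p m * (∑ l ∈ Finset.Icc 1 i, ζ l) - ∑ l ∈ Finset.Icc 1 i, qq p (l - 1) * ζ l := by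
    rw [Finset.mul_sum, ← Finset.sum_sub_distrib]
    apply Finset.sum_congr rfl; intro l _; ring
  have e3 : ∑ l ∈ Finset.Icc 1 i, qq p (l - 1) * ζ l
      = ∑ l ∈ Finset.Icc 2 i, qq p (l - 1) * ζ l := by
    rw [sum_Icc_split (fun l => qq p (l - 1) * ζ l) (by omega : (1:ℕ) ≤ 1 + 1) h1 (le_refl 1)]
    simp [qq_zero]
  rw [e2, e3]
  ring

/-! ### The difference form of the system -/

lemma dpar_one (a : ℕ → ℝ) : dpar a 1 = a 1 := if_pos rfl

lemma dpar_of_ne (a : ℕ → ℝ) {i : ℕ} (h : i ≠ 1) : dpar a i = a i - a (i - 1) := if_neg h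

lemma Req_diff {N : ℕ} {p : ℕ → ℝ} {E : Finset (ℕ × ℕ)} (hE : IsDCGraph N E)
    (ζ : ℕ → ℝ) {k : ℕ} (hk : 1 ≤ k) (hkN : k + 1 ≤ N) :
    (∑ j ∈ Finset.Icc 1 (bG E (k + 1)),
        p j * ((∑ l ∈ Finset.Icc 1 (k + 1), ζ l) - (∑ l ∈ Finset.Icc 1 j, ζ l) + ζ 1))
      - (∑ j ∈ Finset.Icc 1 (bG E k),
        p j * ((∑ l ∈ Finset.Icc 1 k, ζ l) - (∑ l ∈ Finset.Icc 1 j, ζ l) + ζ 1))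
      = qq p (bG E k) * ζ (k + 1)
        + (qq p (bG E (k + 1)) - qq p (bG E k)) * ζ 1
        - ∑ l ∈ Finset.Icc (k + 2) (bG E (k + 1)),
            (qq p (bG E (k + 1)) - qq p (max (l - 1) (bG E k))) * ζ l := by
  have hB1 : k ≤ bG E k := le_bG E hk
  have hB : bG E k ≤ bG E (k + 1) := by
    have := bG_pred_le hE (i := k + 1) (by omega) hkN
    simpa using this
  have hk1B : k + 1 ≤ bG E (k + 1) := le_bG E (by omega)
  rw [Req_closed p ζ (by omega : 1 ≤ k + 1) hk1B, Req_closed p ζ hk hB1]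
  have htop : ∑ l ∈ Finset.Icc 2 (k + 1), qq p (l - 1) * ζ l
      = (∑ l ∈ Finset.Icc 2 k, qq p (l - 1) * ζ l) + qq p k * ζ (k + 1) := by
    rw [Finset.sum_Icc_succ_top (by omega : 2 ≤ k + 1)]
    simp
  rw [htop]
  rcases eq_or_lt_of_le hB1 with hcase | hcase
  · -- bG E k = k
    have h1 : Finset.Icc (k + 1) (bG E k) = ∅ := Finset.Icc_eq_empty (by omega)
    have hcongr : ∑ l ∈ Finset.Icc (k + 2) (bG E (k + 1)),
          (qq p (bG E (k + 1)) - qq p (max (l - 1) (bG E k))) * ζ l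
        = ∑ l ∈ Finset.Icc (k + 2) (bG E (k + 1)),
          (qq p (bG E (k + 1)) - qq p (l - 1)) * ζ l := by
      apply Finset.sum_congr rfl; intro l hl
      rw [Finset.mem_Icc] at hl
      rw [max_eq_left (by omega)]
    rw [h1, hcongr, Finset.sum_empty, ← hcase]
    ring
  · -- k < bG E k
    have hpeel : ∑ l ∈ Finset.Icc (k + 1) (bG E k), (qq p (bG E k) - qq p (l - 1)) * ζ l
        = (qq p (bG E k) - qq p k) * ζ (k + 1)
          + ∑ l ∈ Finset.Icc (k + 2) (bG E k), (qq p (bG E k) - qq p (l - 1)) * ζ l := by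
      have hins : Finset.Icc (k + 1) (bG E k) = insert (k + 1) (Finset.Icc (k + 2) (bG E k)) := by
        ext x; rw [Finset.mem_Icc, Finset.mem_insert, Finset.mem_Icc]; omega
      rw [hins, Finset.sum_insert (by rw [Finset.mem_Icc]; omega)]
      simp
    have hsplit : ∑ l ∈ Finset.Icc (k + 2) (bG E (k + 1)),
          (qq p (bG E (k + 1)) - qq p (l - 1)) * ζ l
        = (∑ l ∈ Finset.Icc (k + 2) (bG E k), (qq p (bG E (k + 1)) - qq p (l - 1)) * ζ l)
          + ∑ l ∈ Finset.Icc (bG E k + 1) (bG E (k + 1)),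
              (qq p (bG E (k + 1)) - qq p (l - 1)) * ζ l :=
      sum_Icc_split _ (by omega) hB (by omega)
    have hsplit2 : ∑ l ∈ Finset.Icc (k + 2) (bG E (k + 1)),
          (qq p (bG E (k + 1)) - qq p (max (l - 1) (bG E k))) * ζ l
        = (∑ l ∈ Finset.Icc (k + 2) (bG E k), (qq p (bG E (k + 1)) - qq p (bG E k)) * ζ l)
          + ∑ l ∈ Finset.Icc (bG E k + 1) (bG E (k + 1)),
              (qq p (bG E (k + 1)) - qq p (l - 1)) * ζ l := by
      rw [sum_Icc_split _ (by omega) hB (by omega)]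
      congr 1
      · apply Finset.sum_congr rfl; intro l hl
        rw [Finset.mem_Icc] at hl
        rw [max_eq_right (by omega)]
      · apply Finset.sum_congr rfl; intro l hl
        rw [Finset.mem_Icc] at hl
        rw [max_eq_left (by omega)]
    have hmerge : ∑ l ∈ Finset.Icc (k + 2) (bG E k), (qq p (bG E (k + 1)) - qq p (bG E k)) * ζ l
        = (∑ l ∈ Finset.Icc (k + 2) (bG E k), (qq p (bG E (k + 1)) - qq p (l - 1)) * ζ l)
          - ∑ l ∈ Finset.Icc (k + 2) (bG E k), (qq p (bG E k) - qq p (l - 1)) * ζ l := by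
      rw [← Finset.sum_sub_distrib]
      apply Finset.sum_congr rfl; intro l _; ring
    rw [hpeel, hsplit, hsplit2, hmerge]
    ring

/-! ### Equivalence with the normalized (gamma) form -/

lemma NSys_iff_Dform {a p : ℕ → ℝ} {E : Finset (ℕ × ℕ)} (ζ : ℕ → ℝ) {i : ℕ}
    (hQ : qq p (bG E (i - 1)) ≠ 0) :
    (ζ i = (dpar a i / qq p (bG E (i - 1))
        - ζ 1 * ((qq p (bG E i) - qq p (bG E (i - 1))) / qq p (bG E (i - 1))))
        + ∑ l ∈ Finset.Icc (i + 1) (bG E i), gammaG p E i l * ζ l)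
    ↔ dpar a i = qq p (bG E (i - 1)) * ζ i
        + (qq p (bG E i) - qq p (bG E (i - 1))) * ζ 1
        - ∑ l ∈ Finset.Icc (i + 1) (bG E i),
            (qq p (bG E i) - qq p (max (l - 1) (bG E (i - 1)))) * ζ l := by
  have expand : qq p (bG E (i - 1)) * ((dpar a i / qq p (bG E (i - 1))
        - ζ 1 * ((qq p (bG E i) - qq p (bG E (i - 1))) / qq p (bG E (i - 1))))
        + ∑ l ∈ Finset.Icc (i + 1) (bG E i), gammaG p E i l * ζ l)
      = dpar a i - (qq p (bG E i) - qq p (bG E (i - 1))) * ζ 1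
        + ∑ l ∈ Finset.Icc (i + 1) (bG E i),
            (qq p (bG E i) - qq p (max (l - 1) (bG E (i - 1)))) * ζ l := by
    rw [mul_add, mul_sub, Finset.mul_sum]
    have t1 : qq p (bG E (i - 1)) * (dpar a i / qq p (bG E (i - 1))) = dpar a i := by
      field_simp
    have t2 : qq p (bG E (i - 1)) * (ζ 1 * ((qq p (bG E i) - qq p (bG E (i - 1)))
        / qq p (bG E (i - 1)))) = (qq p (bG E i) - qq p (bG E (i - 1))) * ζ 1 := by
      field_simp
    have t3 : ∀ l, qq p (bG E (i - 1)) * (gammaG p E i l * ζ l)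
        = (qq p (bG E i) - qq p (max (l - 1) (bG E (i - 1)))) * ζ l := by
      intro l
      rw [gammaG]
      field_simp
    rw [t1, t2, Finset.sum_congr rfl (fun l _ => t3 l)]
  constructor
  · intro h
    have h2 := congrArg (fun x => qq p (bG E (i - 1)) * x) h
    rw [expand] at h2
    linarith
  · intro h
    apply mul_left_cancel₀ hQ
    rw [expand]
    linarith

lemma solvesS_iff {N : ℕ} {a p : ℕ → ℝ} {E : Finset (ℕ × ℕ)} (hN : 1 ≤ N)
    (hp : ∀ i, 1 ≤ i → i ≤ N → 0 < p i) (hE : IsDCGraph N E) (ζ : ℕ → ℝ) :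
    SolvesS N a p E ζ ↔ ∀ i, 1 ≤ i → i ≤ N →
      ζ i = (dpar a i / qq p (bG E (i - 1))
        - ζ 1 * ((qq p (bG E i) - qq p (bG E (i - 1))) / qq p (bG E (i - 1))))
        + ∑ l ∈ Finset.Icc (i + 1) (bG E i), gammaG p E i l * ζ l := by
  have hQne : ∀ i : ℕ, i ≤ N → qq p (bG E (i - 1)) ≠ 0 := by
    intro i hiN
    have h1 : 1 ≤ bG E (i - 1) := one_le_bG E _
    have h2 : bG E (i - 1) ≤ N := by
      rcases Nat.eq_zero_or_pos (i - 1) with h | h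
      · rw [h, bG_zero]; exact hN
      · exact bG_le hE h (by omega)
    exact (qq_pos hp h1 h2).ne'
  -- the difference form of equation 1
  have hone : ∀ η : ℕ → ℝ,
      (∑ j ∈ Finset.Icc 1 (bG E 1),
        p j * ((∑ l ∈ Finset.Icc 1 1, η l) - (∑ l ∈ Finset.Icc 1 j, η l) + η 1))
      = qq p (bG E (1 - 1)) * η 1 + (qq p (bG E 1) - qq p (bG E (1 - 1))) * η 1
        - ∑ l ∈ Finset.Icc (1 + 1) (bG E 1),
            (qq p (bG E 1) - qq p (max (l - 1) (bG E (1 - 1)))) * η l := by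
    intro η
    rw [Req_closed p η (le_refl 1) (le_bG E (le_refl 1))]
    have hb0 : bG E (1 - 1) = 1 := bG_zero E
    have hcongr : ∑ l ∈ Finset.Icc (1 + 1) (bG E 1),
          (qq p (bG E 1) - qq p (max (l - 1) (bG E (1 - 1)))) * η l
        = ∑ l ∈ Finset.Icc (1 + 1) (bG E 1), (qq p (bG E 1) - qq p (l - 1)) * η l := by
      apply Finset.sum_congr rfl; intro l hl
      rw [Finset.mem_Icc] at hl
      rw [hb0, max_eq_left (by omega)]
    rw [hcongr, hb0]
    rw [Finset.Icc_eq_empty (by omega : ¬(2:ℕ) ≤ 1), Finset.sum_empty]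
    ring
  constructor
  · intro hS i h1 hiN
    rw [NSys_iff_Dform ζ (hQne i hiN)]
    rcases Nat.eq_or_lt_of_le h1 with h | h
    · -- i = 1
      subst h
      rw [dpar_one, hS 1 (le_refl 1) hiN, hone ζ]
    · -- i = k + 1 with k ≥ 1
      obtain ⟨k, rfl⟩ : ∃ k, i = k + 1 := ⟨i - 1, by omega⟩
      have hk : 1 ≤ k := by omega
      rw [dpar_of_ne a (by omega)]
      simp only [Nat.add_sub_cancel]
      rw [hS (k + 1) (by omega) hiN, hS k (by omega) (by omega)]
      have h22 : k + 1 + 1 = k + 2 := rfl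
      rw [h22]
      exact Req_diff hE ζ hk hiN
  · intro hD
    have hD' : ∀ i, 1 ≤ i → i ≤ N →
        dpar a i = qq p (bG E (i - 1)) * ζ i
          + (qq p (bG E i) - qq p (bG E (i - 1))) * ζ 1
          - ∑ l ∈ Finset.Icc (i + 1) (bG E i),
              (qq p (bG E i) - qq p (max (l - 1) (bG E (i - 1)))) * ζ l := by
      intro i h1 hiN
      rw [← NSys_iff_Dform ζ (hQne i hiN)]
      exact hD i h1 hiN
    intro i h1
    induction i, h1 using Nat.le_induction with
    | base =>
      intro h1N
      rw [hone ζ, ← hD' 1 (le_refl 1) h1N, dpar_one]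
    | succ k hk ih =>
      intro hkN
      have eqk := hD' (k + 1) (by omega) hkN
      rw [dpar_of_ne a (by omega)] at eqk
      simp only [Nat.add_sub_cancel] at eqk
      have hdiff := Req_diff (p := p) hE ζ hk hkN
      have hak := ih (by omega)
      have h22 : k + 1 + 1 = k + 2 := rfl
      rw [h22] at eqk
      linarith [eqk, hdiff, hak]

/-! ### The key combinatorial identity -/

lemma key_identity {N : ℕ} {E : Finset (ℕ × ℕ)} (hE : IsDCGraph N E)
    (γ : ℕ → ℕ → ℝ) (u : ℕ → ℝ) {i : ℕ} (h1 : 1 ≤ i) (hiN : i ≤ N) :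
    ∑ j ∈ Finset.Icc i N, GammaPath E γ i j * u j
      = u i + ∑ l ∈ Finset.Icc (i + 1) (bG E i),
          γ i l * ∑ j ∈ Finset.Icc l N, GammaPath E γ l j * u j := by
  have hins : Finset.Icc i N = insert i (Finset.Icc (i + 1) N) := by
    ext x; rw [Finset.mem_Icc, Finset.mem_insert, Finset.mem_Icc]; omega
  rw [hins, Finset.sum_insert (by rw [Finset.mem_Icc]; omega), gammaPath_self, one_mul]
  congr 1
  have step1 : ∀ j ∈ Finset.Icc (i + 1) N,
      GammaPath E γ i j * u j
        = ∑ l ∈ Finset.Icc (i + 1) N,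
            (if (i, l) ∈ E then γ i l * (GammaPath E γ l j * u j) else 0) := by
    intro j hj
    rw [Finset.mem_Icc] at hj
    rw [gammaPath_rec E γ (by omega : i < j), Finset.sum_mul]
    have hsub : Finset.Ioc i j ⊆ Finset.Icc (i + 1) N := by
      intro x hx; rw [Finset.mem_Ioc] at hx; rw [Finset.mem_Icc]; omega
    rw [Finset.sum_congr rfl (g := fun l =>
        if (i, l) ∈ E then γ i l * (GammaPath E γ l j * u j) else 0)
        (fun l _ => by by_cases h : (i, l) ∈ E <;> simp [h, mul_assoc])]
    apply Finset.sum_subset hsub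
    intro l hl hnotin
    rw [Finset.mem_Icc] at hl
    rw [Finset.mem_Ioc] at hnotin
    have hjl : j < l := by omega
    rw [gammaPath_of_gt E γ hjl]
    by_cases h : (i, l) ∈ E <;> simp [h]
  rw [Finset.sum_congr rfl step1, Finset.sum_comm]
  have step2 : ∀ l ∈ Finset.Icc (i + 1) N,
      (∑ j ∈ Finset.Icc (i + 1) N,
          if (i, l) ∈ E then γ i l * (GammaPath E γ l j * u j) else 0)
        = if (i, l) ∈ E then γ i l * ∑ j ∈ Finset.Icc l N, GammaPath E γ l j * u j else 0 := by
    intro l hl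
    rw [Finset.mem_Icc] at hl
    split_ifs with h
    · rw [← Finset.mul_sum]
      congr 1
      have hsub : Finset.Icc l N ⊆ Finset.Icc (i + 1) N := by
        have := ((edge_iff hE h1).mp h).1
        intro x hx; rw [Finset.mem_Icc] at hx ⊢; omega
      refine (Finset.sum_subset hsub ?_).symm
      intro j hj hnotin
      rw [Finset.mem_Icc] at hj hnotin
      push_neg at hnotin
      rw [gammaPath_of_gt E γ (by omega)]
      ring
    · exact Finset.sum_const_zero
  rw [Finset.sum_congr rfl step2, ← Finset.sum_filter]
  apply Finset.sum_congr _ (fun _ _ => rfl)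
  ext l
  rw [Finset.mem_filter, Finset.mem_Icc, Finset.mem_Icc]
  constructor
  · rintro ⟨⟨h1l, _⟩, hedge⟩
    exact ⟨h1l, ((edge_iff hE h1).mp hedge).2⟩
  · rintro ⟨h1l, hlb⟩
    have hbN : bG E i ≤ N := bG_le hE h1 hiN
    exact ⟨⟨h1l, by omega⟩, (edge_iff hE h1).mpr ⟨by omega, hlb⟩⟩

/-! ### The explicit solution -/

noncomputable def uu (a p : ℕ → ℝ) (E : Finset (ℕ × ℕ)) (w : ℝ) (j : ℕ) : ℝ :=
  dpar a j / qq p (bG E (j - 1))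
    - w * ((qq p (bG E j) - qq p (bG E (j - 1))) / qq p (bG E (j - 1)))

noncomputable def AA (N : ℕ) (a p : ℕ → ℝ) (E : Finset (ℕ × ℕ)) (i : ℕ) : ℝ :=
  ∑ j ∈ Finset.Icc i N, GammaG p E i j * dpar a j / qq p (bG E (j - 1))

noncomputable def BB (N : ℕ) (p : ℕ → ℝ) (E : Finset (ℕ × ℕ)) (i : ℕ) : ℝ :=
  ∑ j ∈ Finset.Icc i N,
    GammaG p E i j * (qq p (bG E j) - qq p (bG E (j - 1))) / qq p (bG E (j - 1))

lemma z1G_eq (N : ℕ) (a p : ℕ → ℝ) (E : Finset (ℕ × ℕ)) :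
    z1G N a p E = AA N a p E 1 / (1 + BB N p E 1) := rfl

lemma zG_of_ne (N : ℕ) (a p : ℕ → ℝ) (E : Finset (ℕ × ℕ)) {i : ℕ} (h : i ≠ 1) :
    zG N a p E i = AA N a p E i - z1G N a p E * BB N p E i := by
  simp only [zG, if_neg h]
  rfl

lemma zG_one (N : ℕ) (a p : ℕ → ℝ) (E : Finset (ℕ × ℕ)) :
    zG N a p E 1 = z1G N a p E := by
  simp [zG]

lemma sum_u (N : ℕ) (a p : ℕ → ℝ) (E : Finset (ℕ × ℕ)) (w : ℝ) (i : ℕ) :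
    ∑ j ∈ Finset.Icc i N, GammaG p E i j * uu a p E w j
      = AA N a p E i - w * BB N p E i := by
  rw [AA, BB, Finset.mul_sum, ← Finset.sum_sub_distrib]
  apply Finset.sum_congr rfl; intro j _
  rw [uu]; ring

lemma key_identity_G {N : ℕ} {E : Finset (ℕ × ℕ)} (hE : IsDCGraph N E)
    (a p : ℕ → ℝ) (w : ℝ) {i : ℕ} (h1 : 1 ≤ i) (hiN : i ≤ N) :
    ∑ j ∈ Finset.Icc i N, GammaG p E i j * uu a p E w j
      = uu a p E w i + ∑ l ∈ Finset.Icc (i + 1) (bG E i),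
          gammaG p E i l * ∑ j ∈ Finset.Icc l N, GammaG p E l j * uu a p E w j :=
  key_identity hE (gammaG p E) (uu a p E w) h1 hiN

lemma BB_nonneg {N : ℕ} {p : ℕ → ℝ} {E : Finset (ℕ × ℕ)} (hN : 1 ≤ N)
    (hp : ∀ i, 1 ≤ i → i ≤ N → 0 < p i) (hE : IsDCGraph N E) {i : ℕ} (h1 : 1 ≤ i) :
    0 ≤ BB N p E i := by
  apply Finset.sum_nonneg
  intro j hj
  rw [Finset.mem_Icc] at hj
  have hj1 : 1 ≤ j := le_trans h1 hj.1
  have hΓ : 0 ≤ GammaG p E i j := gammaPath_nonneg (gammaG_nonneg hp hE) i j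
  have hb : bG E (j - 1) ≤ bG E j := bG_pred_le hE hj1 hj.2
  have hbN : bG E j ≤ N := bG_le hE hj1 hj.2
  have hb1 : 1 ≤ bG E (j - 1) := one_le_bG E _
  have hq : 0 < qq p (bG E (j - 1)) := qq_pos hp hb1 (le_trans hb hbN)
  have hΔ : 0 ≤ qq p (bG E j) - qq p (bG E (j - 1)) := by
    have := qq_mono hp hb hbN; linarith
  exact div_nonneg (mul_nonneg hΓ hΔ) hq.le

lemma z_formula {N : ℕ} {a p : ℕ → ℝ} {E : Finset (ℕ × ℕ)} (hN : 1 ≤ N)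
    (hp : ∀ i, 1 ≤ i → i ≤ N → 0 < p i) (hE : IsDCGraph N E) {i : ℕ} (h1 : 1 ≤ i) :
    zG N a p E i = ∑ j ∈ Finset.Icc i N, GammaG p E i j * uu a p E (z1G N a p E) j := by
  rw [sum_u]
  rcases eq_or_ne i 1 with rfl | hne
  · rw [zG_one]
    have hBB : 0 ≤ BB N p E 1 := BB_nonneg hN hp hE (le_refl 1)
    have hne0 : 1 + BB N p E 1 ≠ 0 := by linarith
    have h2 : z1G N a p E * (1 + BB N p E 1) = AA N a p E 1 := by
      rw [z1G_eq, div_mul_cancel₀ _ hne0]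
    have h3 : z1G N a p E * (1 + BB N p E 1)
        = z1G N a p E + z1G N a p E * BB N p E 1 := by ring
    linarith
  · rw [zG_of_ne N a p E hne]


lemma stmt8_main {N : ℕ} (hN : 1 ≤ N) {a p : ℕ → ℝ} (hap : IsParam N a p)
    {E : Finset (ℕ × ℕ)} (hE : IsDCGraph N E) :
    SolvesS N a p E (zG N a p E) ∧
    ∀ ζ : ℕ → ℝ, SolvesS N a p E ζ → ∀ i, 1 ≤ i → i ≤ N → ζ i = zG N a p E i := by
  obtain ⟨_, _, hp⟩ := hap
  constructor
  · -- existence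
    rw [solvesS_iff hN hp hE]
    intro i h1 hiN
    have e := key_identity_G hE a p (z1G N a p E) h1 hiN
    have hsum : ∑ l ∈ Finset.Icc (i + 1) (bG E i),
          gammaG p E i l * ∑ j ∈ Finset.Icc l N, GammaG p E l j * uu a p E (z1G N a p E) j
        = ∑ l ∈ Finset.Icc (i + 1) (bG E i), gammaG p E i l * zG N a p E l := by
      apply Finset.sum_congr rfl; intro l hl
      rw [Finset.mem_Icc] at hl
      rw [← z_formula hN hp hE (by omega : 1 ≤ l)]
    rw [hsum] at e
    have final : zG N a p E i = uu a p E (z1G N a p E) i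
        + ∑ l ∈ Finset.Icc (i + 1) (bG E i), gammaG p E i l * zG N a p E l := by
      rw [z_formula hN hp hE h1]
      exact e
    rw [zG_one]
    exact final
  · -- uniqueness
    intro ζ hζ
    have hNS := (solvesS_iff hN hp hE ζ).mp hζ
    have hform : ∀ k : ℕ, ∀ i, 1 ≤ i → i ≤ N → N ≤ i + k →
        ζ i = ∑ j ∈ Finset.Icc i N, GammaG p E i j * uu a p E (ζ 1) j := by
      intro k
      induction k with
      | zero =>
        intro i h1 hiN hNk
        have hbi : bG E i ≤ i := by have := bG_le hE h1 hiN; omega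
        have hempty : Finset.Icc (i + 1) (bG E i) = ∅ :=
          Finset.Icc_eq_empty (by omega)
        rw [key_identity_G hE a p (ζ 1) h1 hiN, hempty, Finset.sum_empty, add_zero]
        have h := hNS i h1 hiN
        rw [hempty, Finset.sum_empty, add_zero] at h
        exact h
      | succ k ih =>
        intro i h1 hiN hNk
        rw [key_identity_G hE a p (ζ 1) h1 hiN]
        have hbN : bG E i ≤ N := bG_le hE h1 hiN
        have hsum : ∑ l ∈ Finset.Icc (i + 1) (bG E i),
              gammaG p E i l * ∑ j ∈ Finset.Icc l N, GammaG p E l j * uu a p E (ζ 1) j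
            = ∑ l ∈ Finset.Icc (i + 1) (bG E i), gammaG p E i l * ζ l := by
          apply Finset.sum_congr rfl; intro l hl
          rw [Finset.mem_Icc] at hl
          rw [← ih l (by omega) (by omega) (by omega)]
        rw [hsum]
        exact hNS i h1 hiN
    have hζ1 : ζ 1 = z1G N a p E := by
      have h := hform N 1 (le_refl 1) hN (by omega)
      rw [sum_u] at h
      have hBB : 0 ≤ BB N p E 1 := BB_nonneg hN hp hE (le_refl 1)
      have hne0 : 1 + BB N p E 1 ≠ 0 := by linarith
      rw [z1G_eq, eq_div_iff hne0]
      have h3 : ζ 1 * (1 + BB N p E 1) = ζ 1 + ζ 1 * BB N p E 1 := by ring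
      linarith
    intro i h1 hiN
    rcases eq_or_ne i 1 with rfl | hne1
    · rw [zG_one]
      exact hζ1
    · have h := hform N i h1 hiN (by omega)
      rw [sum_u, hζ1] at h
      rw [zG_of_ne N a p E hne1]
      exact h


end Stmt8

/-- unique solution of the linear system `S^G(a,p)`, Theorem 4.4. -/
theorem stmt_8 (N : ℕ) (hN : 1 ≤ N) (a p : ℕ → ℝ) (hap : IsParam N a p)
    (E : Finset (ℕ × ℕ)) (hE : IsDCGraph N E) :
    SolvesS N a p E (zG N a p E) ∧
    ∀ ζ : ℕ → ℝ, SolvesS N a p E ζ → ∀ i, 1 ≤ i → i ≤ N → ζ i = zG N a p E i := by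
  exact Stmt8.stmt8_main hN hap hE
end
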